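/- Let X be an infinite compact metric space, α : X → X a homeomorphism, and 𝒱 a vector bundle over X. The C*-correspondence Γ(𝒱,α) is minimal (i.e., the only closed ideals J ⊆ C(X) with ⟨ℰ, φ(J)ℰ⟩ ⊆ J are {0} and C(X)) if and only if α is a minimal homeomorphism (i.e., the only closed α-invariant subsets of X are ∅ and X). -/

import Mathlib

/-!
STATEMENT 5. Let `X` be an infinite compact metric space, `α : X → X` a homeomorphism,
and `𝒱` a (Hermitian) vector bundle over `X`.  The C*-correspondence `ℰ = Γ(𝒱, α)`
(continuous sections, right `C(X)`-inner product given pointwise by the Hermitian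
structure, left action `φ(f)ξ = ξ·(f∘α)`) is minimal — the only closed ideals
`J ⊆ C(X)` with `⟨ℰ, φ(J)ℰ⟩ ⊆ J` are `{0}` and `C(X)` — if and only if `α` is a minimal
homeomorphism — the only closed subsets `E ⊆ X` with `α(E) ⊆ E` are `∅` and `X`.
Note `⟨ξ, φ(f)η⟩ = (f∘α)·⟨ξ,η⟩`.
-/

open Bundle

open Set in

lemma aux_exists_section
    {X : Type*} [MetricSpace X]
    {F : Type*} [NormedAddCommGroup F] [NormedSpace ℂ F] [Nontrivial F]
    (V : X → Type*) [∀ x, NormedAddCommGroup (V x)] [∀ x, InnerProductSpace ℂ (V x)]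
    [TopologicalSpace (Bundle.TotalSpace F V)] [FiberBundle F V] [VectorBundle ℂ F V]
    (x₀ : X) :
    ∃ s : ∀ x, V x, Continuous (fun x => (Bundle.TotalSpace.mk x (s x) : Bundle.TotalSpace F V))
      ∧ s x₀ ≠ 0 := by
  obtain ⟨w, hw⟩ := exists_ne (0 : F)
  set e := trivializationAt F V x₀ with he
  have hx₀ : x₀ ∈ e.baseSet := FiberBundle.mem_baseSet_trivializationAt F V x₀
  obtain ⟨ε, hε, hball⟩ := Metric.isOpen_iff.mp e.open_baseSet x₀ hx₀
  set g : X → ℝ := fun x => max 0 (1 - dist x x₀ / (ε / 2)) with hgdef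
  have hg : Continuous g := by fun_prop
  have hg0 : g x₀ = 1 := by simp [hgdef]
  have htsupp : tsupport g ⊆ e.baseSet := by
    have h1 : Function.support g ⊆ Metric.ball x₀ (ε / 2) := by
      intro x hx
      have h0 : 0 < g x := lt_of_le_of_ne (le_max_left _ _) (Ne.symm hx)
      have ht : 0 < 1 - dist x x₀ / (ε / 2) := by
        rcases lt_max_iff.mp h0 with h | h
        · exact absurd h (lt_irrefl 0)
        · exact h
      have : dist x x₀ / (ε / 2) < 1 := by linarith
      have := (div_lt_one (by linarith)).mp this
      simpa [Metric.mem_ball] using this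
    refine (closure_mono h1).trans ?_
    refine (Metric.closure_ball_subset_closedBall).trans ?_
    refine subset_trans ?_ hball
    intro x hx
    simp only [Metric.mem_closedBall] at hx
    simp only [Metric.mem_ball]
    linarith
  set s : ∀ x, V x := fun x => e.symmL ℂ x (((g x : ℝ) : ℂ) • w) with hsdef
  have key : ∀ (e' : Trivialization F (Bundle.TotalSpace.proj : Bundle.TotalSpace F V → X))
      (h : X → F), Continuous h →
      ContinuousOn (fun x => (Bundle.TotalSpace.mk x (e'.symm x (h x)) : Bundle.TotalSpace F V))
        e'.baseSet := by
    intro e' h hh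
    exact e'.continuousOn_symm.comp (Continuous.continuousOn (continuous_id.prodMk hh))
      (fun x hx => ⟨hx, trivial⟩)
  refine ⟨s, ?_, ?_⟩
  · rw [continuous_iff_continuousAt]
    intro x₁
    by_cases hx₁ : x₁ ∈ e.baseSet
    · exact ((key e (fun x => ((g x : ℝ) : ℂ) • w) (by fun_prop)).congr fun x hx => by
        simp only [hsdef, Trivialization.symmL_apply (R := ℂ) e hx]).continuousAt
        (e.open_baseSet.mem_nhds hx₁)
    · have hx₁' : x₁ ∉ tsupport g := fun h => hx₁ (htsupp h)
      set e' := trivializationAt F V x₁ with he'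
      have hx₁'' : x₁ ∈ e'.baseSet := FiberBundle.mem_baseSet_trivializationAt F V x₁
      have hU : (e'.baseSet ∩ (tsupport g)ᶜ) ∈ nhds x₁ :=
        (e'.open_baseSet.inter (isClosed_tsupport g).isOpen_compl).mem_nhds ⟨hx₁'', hx₁'⟩
      have hco : ContinuousOn (fun x => (Bundle.TotalSpace.mk x (s x) : Bundle.TotalSpace F V))
          (e'.baseSet ∩ (tsupport g)ᶜ) := by
        refine ((key e' (fun _ => 0) continuous_const).mono inter_subset_left).congr ?_
        intro x hx
        have hgx : g x = 0 := image_eq_zero_of_notMem_tsupport hx.2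
        have h1 : e'.symm x (0 : F) = 0 := by
          rw [← Trivialization.symmL_apply (R := ℂ) e' hx.1]; exact map_zero _
        have h2 : s x = 0 := by
          rw [hsdef]
          simp only [hgx, Complex.ofReal_zero, zero_smul]
          exact map_zero _
        simp [h1, h2]
      exact hco.continuousAt hU
  · rw [hsdef]
    simp only [hg0, Complex.ofReal_one, one_smul]
    intro hcontra
    have : w = 0 := by
      have := e.continuousLinearMapAt_symmL (R := ℂ) hx₀ w
      rw [hcontra] at this
      rw [← this]
      exact map_zero _
    exact hw this


theorem statement5
    (X : Type*) [MetricSpace X] [CompactSpace X] [Infinite X]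
    (α : X ≃ₜ X)
    (F : Type*) [NormedAddCommGroup F] [NormedSpace ℂ F] [Nontrivial F]
    (V : X → Type*) [∀ x, NormedAddCommGroup (V x)] [∀ x, InnerProductSpace ℂ (V x)]
    [TopologicalSpace (Bundle.TotalSpace F V)] [FiberBundle F V] [VectorBundle ℂ F V]
    -- Hermitian structure: the pointwise inner product of continuous sections is
    -- continuous, so it defines the C(X)-valued inner product of Γ(𝒱)
    (hcont : ∀ ξ η : {s : ∀ x, V x //
        Continuous fun x => (Bundle.TotalSpace.mk x (s x) : Bundle.TotalSpace F V)},
      Continuous fun x => (inner ℂ (ξ.1 x) (η.1 x) : ℂ)) :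
    -- Γ(𝒱, α) is minimal
    ((∀ J : Ideal C(X, ℂ), IsClosed (J : Set C(X, ℂ)) →
        (∀ f ∈ J, ∀ ξ η : {s : ∀ x, V x //
            Continuous fun x => (Bundle.TotalSpace.mk x (s x) : Bundle.TotalSpace F V)},
          (f.comp ⟨⇑α, α.continuous⟩) * (⟨_, hcont ξ η⟩ : C(X, ℂ)) ∈ J) →
        J = ⊥ ∨ J = ⊤)
      ↔
    -- … if and only if α is minimal
      (∀ E : Set X, IsClosed E → (⇑α) '' E ⊆ E → E = ∅ ∨ E = Set.univ)) := by
  constructor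
  · intro hmin E hE hαE
    rcases E.eq_empty_or_nonempty with hne | hne
    · exact Or.inl hne
    set J : Ideal C(X, ℂ) := ContinuousMap.idealOfSet ℂ Eᶜ with hJ
    have hJc : IsClosed (J : Set C(X, ℂ)) := ContinuousMap.idealOfSet_closed ℂ Eᶜ
    have hinv : ∀ f ∈ J, ∀ ξ η : {s : ∀ x, V x //
        Continuous fun x => (Bundle.TotalSpace.mk x (s x) : Bundle.TotalSpace F V)},
        (f.comp ⟨⇑α, α.continuous⟩) * (⟨_, hcont ξ η⟩ : C(X, ℂ)) ∈ J := by
      intro f hf ξ η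
      rw [hJ, ContinuousMap.mem_idealOfSet] at hf ⊢
      intro x hx
      rw [compl_compl] at hx
      have h1 : f (α x) = 0 := hf (by rw [compl_compl]; exact hαE ⟨x, hx, rfl⟩)
      simp [h1]
    rcases hmin J hJc hinv with h | h
    · -- J = ⊥ : every function vanishing on E is 0, so E = univ
      right
      have hd : Continuous (fun x => ((Metric.infDist x E : ℝ) : ℂ)) :=
        Complex.continuous_ofReal.comp (Metric.continuous_infDist_pt E)
      set f : C(X, ℂ) := ⟨_, hd⟩ with hf
      have hfJ : f ∈ J := by
        rw [hJ, ContinuousMap.mem_idealOfSet]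
        intro x hx
        rw [compl_compl] at hx
        simp [hf, Metric.infDist_zero_of_mem hx]
      rw [h, Ideal.mem_bot] at hfJ
      ext y
      simp only [Set.mem_univ, iff_true]
      have : f y = 0 := by rw [hfJ]; rfl
      have hy : Metric.infDist y E = 0 := by
        simpa [hf, Complex.ofReal_eq_zero] using this
      exact (hE.mem_iff_infDist_zero hne).mpr hy
    · -- J = ⊤ : 1 vanishes on E, so E = ∅, contradiction with nonempty
      exfalso
      obtain ⟨x, hx⟩ := hne
      have h1 : (1 : C(X, ℂ)) ∈ J := h ▸ Submodule.mem_top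
      rw [hJ, ContinuousMap.mem_idealOfSet] at h1
      have := h1 (by rw [compl_compl]; exact hx)
      simp at this
  · intro hmin J hJc hinv
    have hJeq : ContinuousMap.idealOfSet ℂ (ContinuousMap.setOfIdeal J) = J := ContinuousMap.idealOfSet_ofIdeal_isClosed hJc
    set E : Set X := (ContinuousMap.setOfIdeal J)ᶜ with hEdef
    have hEc : IsClosed E := (ContinuousMap.setOfIdeal_open J).isClosed_compl
    have hαE : (⇑α) '' E ⊆ E := by
      rintro - ⟨x, hx, rfl⟩
      have hx' := ContinuousMap.notMem_setOfIdeal.mp hx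
      refine ContinuousMap.notMem_setOfIdeal.mpr ?_
      intro f hf
      obtain ⟨s, hs, hs0⟩ := aux_exists_section (F := F) V x
      set ξ : {s : ∀ x, V x //
          Continuous fun x => (Bundle.TotalSpace.mk x (s x) : Bundle.TotalSpace F V)} :=
        ⟨s, hs⟩ with hξ
      have h0 := hx' (hinv f hf ξ ξ)
      simp only [ContinuousMap.mul_apply, ContinuousMap.comp_apply, ContinuousMap.coe_mk] at h0
      have hip : (inner ℂ (s x) (s x) : ℂ) ≠ 0 := inner_self_ne_zero.mpr hs0
      rcases mul_eq_zero.mp h0 with h | h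
      · exact h
      · exact absurd h hip
    rcases hmin E hEc hαE with h | h
    · -- E = ∅ : J = ⊤
      right
      have hs : ContinuousMap.setOfIdeal J = Set.univ := by
        rw [← compl_compl (ContinuousMap.setOfIdeal J), ← hEdef, h, Set.compl_empty]
      rw [← hJeq, hs]
      refine eq_top_iff.mpr fun f _ => ContinuousMap.mem_idealOfSet.mpr fun x hx => absurd hx (by simp)
    · -- E = univ : J = ⊥
      left
      have hs : ContinuousMap.setOfIdeal J = (∅ : Set X) := by
        rw [← compl_compl (ContinuousMap.setOfIdeal J), ← hEdef, h, Set.compl_univ]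
      rw [← hJeq, hs, ContinuousMap.idealOfEmpty_eq_bot]
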